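/- Let a₁,a₂ ∈ F, n₁,n₂ ∈ ℤ and h ∈ F[X] be data for the change-of-variables conjecture whose depth is non-negative. Then the conjecture is true for this data: for every Schwartz–Bruhat function f on K×K, with g the lift of f at (a₁,a₂),(n₁,n₂), the function Φ(x,y) = g(x, y − h(x)) is Fubini on F×F with repeated integral ∫_K∫_K f(u,v) du dv · X^{n₁+n₂}. -/

import Mathlib

noncomputable section

open MeasureTheory Polynomial
open scoped Classical

/-- The field `ℂ(X)` of complex rational functions. -/
abbrev CX : Type := RatFunc ℂ

/-- A complete discrete valuation field with residue field `K`: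
`Fc` is the field, `O` its ring of integers, `t` a fixed prime element,
`res` the residue map and `ν` the discrete valuation.  The axioms say that `O` is a
valuation subring of `Fc`, `t` is irreducible in `O`, `res` is surjective with kernel
`tO`, every nonzero element is a unit times `t ^ ν`, and `O` is `t`-adically complete. -/
structure CDVF (K : Type) [Field K] : Type 1 where
  Fc : Type
  fieldF : Field Fc
  O : Subring Fc
  t : Fc
  ht : t ∈ O
  res : O →+* K
  ν : Fc → ℤ
  hval : ∀ x : Fc, x ∈ O ∨ x⁻¹ ∈ O
  hirr : Irreducible (⟨t, ht⟩ : O)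
  hres_surj : Function.Surjective res
  hres_ker : ∀ x : O, res x = 0 ↔ (⟨t, ht⟩ : O) ∣ x
  hν : ∀ x : Fc, x ≠ 0 → ∃ u : O, IsUnit u ∧ x = (u : Fc) * t ^ ν x
  hcomplete : ∀ s : ℕ → O, (∀ n : ℕ, (⟨t, ht⟩ : O) ^ n ∣ (s (n + 1) - s n)) →
    ∃ L : O, ∀ n : ℕ, (⟨t, ht⟩ : O) ^ n ∣ (L - s n)

attribute [instance] CDVF.fieldF

namespace CDVF

variable {K : Type} [Field K] (E : CDVF K)

/-- The residue map, extended by zero outside the ring of integers. -/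
def resF (x : E.Fc) : K := if h : x ∈ E.O then E.res ⟨x, h⟩ else 0

/-- The translated fractional ideal `a + t^c O`. -/
def tfi (a : E.Fc) (c : ℤ) : Set E.Fc := {y : E.Fc | ∃ z ∈ E.O, y = a + E.t ^ c * z}

/-- The lift `f⁰` of a function on the residue field. -/
def lift0 (f : K → ℂ) : E.Fc → CX := fun x =>
  if x ∈ E.O then algebraMap ℂ CX (f (E.resF x)) else 0

/-- The lift `f^{a,n}` of `f` at `a, n`, determined by `f^{a,n}(a + t^n x) = f⁰(x)`. -/
def liftAt (f : K → ℂ) (a : E.Fc) (n : ℤ) : E.Fc → CX := fun z =>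
  E.lift0 f (E.t ^ (-n) * (z - a))

/-- The two-dimensional lift `f⁰` of `f : K × K → ℂ`. -/
def lift0₂ (f : K × K → ℂ) : E.Fc → E.Fc → CX := fun x y =>
  if x ∈ E.O ∧ y ∈ E.O then algebraMap ℂ CX (f (E.resF x, E.resF y)) else 0

/-- The lift of `f : K × K → ℂ` at `(a₁,a₂),(n₁,n₂)`. -/
def liftAt₂ (f : K × K → ℂ) (a₁ a₂ : E.Fc) (n₁ n₂ : ℤ) : E.Fc → E.Fc → CX := fun z w =>
  E.lift0₂ f (E.t ^ (-n₁) * (z - a₁)) (E.t ^ (-n₂) * (w - a₂))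

/-- The space `L(F)` of integrable functions on `F`: the `ℂ(X)`-span of the lifts
`f^{a,n}` of Haar integrable functions `f` on the residue field. -/
def LF [MeasurableSpace K] (μ : Measure K) : Submodule CX (E.Fc → CX) :=
  Submodule.span CX
    {g : E.Fc → CX | ∃ f : K → ℂ, Integrable f μ ∧ ∃ (a : E.Fc) (n : ℤ), g = E.liftAt f a n}

/-- `Φ(x,y) = f⁰(x, y − t^R q(x))`. -/
def Phi (f : K × K → ℂ) (R : ℤ) (q : Polynomial E.O) : E.Fc → E.Fc → CX := fun x y =>
  E.lift0₂ f x (y - E.t ^ R * Polynomial.eval x (q.map E.O.subtype))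

/-- The non-singular part `Φ_ns` of `Φ`: the restriction of `Φ` to `W_ns × F`,
extended by zero, where `W_ns = {x ∈ O : q̄′(x̄) ≠ 0}`. -/
def PhiNS (f : K × K → ℂ) (R : ℤ) (q : Polynomial E.O) : E.Fc → E.Fc → CX := fun x y =>
  if x ∈ E.O ∧ Polynomial.eval (E.resF x) (Polynomial.derivative (q.map E.res)) ≠ 0 then
    E.Phi f R q x y else 0

/-- The singular part `Φ_sing` of `Φ`: the restriction of `Φ` to `W_sing × F`,
extended by zero, where `W_sing = {x ∈ O : q̄′(x̄) = 0}`. -/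
def PhiSing (f : K × K → ℂ) (R : ℤ) (q : Polynomial E.O) : E.Fc → E.Fc → CX := fun x y =>
  if x ∈ E.O ∧ Polynomial.eval (E.resF x) (Polynomial.derivative (q.map E.res)) = 0 then
    E.Phi f R q x y else 0

end CDVF

section Normed

variable {K : Type} [NontriviallyNormedField K]

/-- The absolute value `|α| = |res(α t^{−ν(α)})|_K ⬝ X^{ν(α)} ∈ ℂ(X)` of `α ∈ F^×`. -/
def CDVF.absF (E : CDVF K) (α : E.Fc) : CX :=
  algebraMap ℂ CX ((‖E.resF (α * E.t ^ (-E.ν α))‖ : ℝ) : ℂ) * RatFunc.X ^ E.ν α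

/-- Schwartz–Bruhat functions on `K × K` (for nonarchimedean `K`: the locally constant
functions of compact support). -/
def IsSB (f : K × K → ℂ) : Prop := IsLocallyConstant f ∧ HasCompactSupport f

variable [MeasurableSpace K] (μ : Measure K)

/-- A Haar integrable `f : K × K → ℂ` is Fubini: both repeated integrals exist and agree. -/
def KFubini (f : K × K → ℂ) : Prop :=
  Integrable f (μ.prod μ) ∧
  (∀ u : K, Integrable (fun v => f (u, v)) μ) ∧
  (∀ v : K, Integrable (fun u => f (u, v)) μ) ∧
  Integrable (fun u => ∫ v, f (u, v) ∂μ) μ ∧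
  Integrable (fun v => ∫ u, f (u, v) ∂μ) μ ∧
  (∫ u, ∫ v, f (u, v) ∂μ ∂μ) = ∫ v, ∫ u, f (u, v) ∂μ ∂μ

/-- `I` is the two-dimensional integral `∫^F` on `L(F)`: a `ℂ(X)`-linear functional which
lifts the Haar integral, is translation invariant, and is compatible with multiplicative
structure. -/
def CDVF.IsIntegralF (E : CDVF K) (I : (E.Fc → CX) →ₗ[CX] CX) : Prop :=
  (∀ f : K → ℂ, Integrable f μ → I (E.lift0 f) = algebraMap ℂ CX (∫ u, f u ∂μ)) ∧
  (∀ g ∈ E.LF μ, ∀ a : E.Fc, I (fun x => g (x + a)) = I g) ∧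
  (∀ g ∈ E.LF μ, ∀ α : E.Fc, α ≠ 0 → I (fun x => g (α * x)) = (E.absF α)⁻¹ * I g)

/-- A `ℂ(X)`-valued function on `F × F` is Fubini (with respect to the integral `I`):
all sections and repeated integrands are integrable and the two repeated integrals agree. -/
def CDVF.FFubini (E : CDVF K) (I : (E.Fc → CX) →ₗ[CX] CX) (g : E.Fc → E.Fc → CX) : Prop :=
  (∀ x : E.Fc, (fun y => g x y) ∈ E.LF μ) ∧
  ((fun x => I (fun y => g x y)) ∈ E.LF μ) ∧
  (∀ y : E.Fc, (fun x => g x y) ∈ E.LF μ) ∧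
  ((fun y => I (fun x => g x y)) ∈ E.LF μ) ∧
  I (fun x => I (fun y => g x y)) = I (fun y => I (fun x => g x y))

/-- The conclusion of the change-of-variables conjecture for the data
`a₁, a₂, n₁, n₂, h`: for every Schwartz–Bruhat `f` on `K × K`, with `g` the lift of `f` at
`(a₁,a₂),(n₁,n₂)`, the function `(x,y) ↦ g(x, y − h(x))` is Fubini on `F × F` with
repeated integral `∫∫ f du dv ⬝ X^{n₁+n₂}`. -/
def CDVF.ConjHolds (E : CDVF K) (I : (E.Fc → CX) →ₗ[CX] CX)
    (a₁ a₂ : E.Fc) (n₁ n₂ : ℤ) (h : Polynomial E.Fc) : Prop :=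
  ∀ f : K × K → ℂ, IsSB f →
    E.FFubini μ I (fun x y => E.liftAt₂ f a₁ a₂ n₁ n₂ x (y - Polynomial.eval x h)) ∧
    I (fun y => I (fun x => E.liftAt₂ f a₁ a₂ n₁ n₂ x (y - Polynomial.eval x h))) =
      algebraMap ℂ CX (∫ v, ∫ u, f (u, v) ∂μ ∂μ) * RatFunc.X ^ (n₁ + n₂)

end Normed

-- tube lemma
lemma aux_tube {X Y : Type} [TopologicalSpace X] [TopologicalSpace Y] {φ : X × Y → ℂ}
    (hlc : IsLocallyConstant φ) (hcs : HasCompactSupport φ) (u₀ : X) :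
    ∃ U : Set X, IsOpen U ∧ u₀ ∈ U ∧ ∀ u ∈ U, ∀ v : Y, φ (u, v) = φ (u₀, v) := by
  classical
  have hB : IsCompact (Prod.snd '' tsupport φ) := hcs.image continuous_snd
  have key : ∀ v : Y, ∃ UV : Set X × Set Y, IsOpen UV.1 ∧ IsOpen UV.2 ∧ u₀ ∈ UV.1 ∧ v ∈ UV.2 ∧
      ∀ u ∈ UV.1, ∀ v' ∈ UV.2, φ (u, v') = φ (u₀, v') := by
    intro v
    obtain ⟨W, hWo, hWmem, hWconst⟩ := hlc.exists_open (u₀, v)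
    obtain ⟨Uv, Vv, hUo, hVo, hu, hv, hsub⟩ := isOpen_prod_iff.1 hWo u₀ v hWmem
    refine ⟨(Uv, Vv), hUo, hVo, hu, hv, fun u hu' v' hv' => ?_⟩
    rw [hWconst _ (hsub (Set.mk_mem_prod hu' hv')), hWconst _ (hsub (Set.mk_mem_prod hu hv'))]
  choose UV hUo hVo hu₀ hvm hconst using key
  obtain ⟨s, hs⟩ := hB.elim_finite_subcover (fun v => (UV v).2) (fun v => hVo v)
    (fun p hp => Set.mem_iUnion.2 ⟨p, hvm p⟩)
  refine ⟨⋂ v ∈ s, (UV v).1, isOpen_biInter_finset (fun v _ => hUo v),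
    Set.mem_iInter₂.2 (fun v _ => hu₀ v), fun u hu v => ?_⟩
  by_cases hvB : v ∈ Prod.snd '' tsupport φ
  · obtain ⟨i, hi, hvi⟩ := Set.mem_iUnion₂.1 (hs hvB)
    exact hconst i u (Set.mem_iInter₂.1 hu i hi) v hvi
  · have h1 : φ (u, v) = 0 := image_eq_zero_of_notMem_tsupport (fun hmem => hvB ⟨(u, v), hmem, rfl⟩)
    have h2 : φ (u₀, v) = 0 := image_eq_zero_of_notMem_tsupport (fun hmem => hvB ⟨(u₀, v), hmem, rfl⟩)
    rw [h1, h2]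

lemma aux_g1 {K : Type} [NontriviallyNormedField K] [MeasurableSpace K]
    (μ : Measure K) {φ : K × K → ℂ} (hlc : IsLocallyConstant φ) (hcs : HasCompactSupport φ) :
    IsLocallyConstant (fun u => ∫ v, φ (u, v) ∂μ) ∧
      HasCompactSupport (fun u => ∫ v, φ (u, v) ∂μ) := by
  constructor
  · rw [IsLocallyConstant.iff_exists_open]
    intro u₀
    obtain ⟨U, hUo, hmem, hconst⟩ := aux_tube hlc hcs u₀
    refine ⟨U, hUo, hmem, fun u hu => ?_⟩
    show ∫ v, φ (u, v) ∂μ = ∫ v, φ (u₀, v) ∂μ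
    rw [show (fun v => φ (u, v)) = (fun v => φ (u₀, v)) from funext (hconst u hu)]
  · apply HasCompactSupport.intro (hcs.image continuous_fst)
    intro u hu
    have h0 : ∀ v, φ (u, v) = 0 :=
      fun v => image_eq_zero_of_notMem_tsupport (fun hmem => hu ⟨(u, v), hmem, rfl⟩)
    simp [h0]

-- right invariance
example {K : Type} [NontriviallyNormedField K] [MeasurableSpace K] [BorelSpace K]
    (μ : Measure K) [μ.IsAddHaarMeasure] (g : K → ℂ) (a : K) :
    ∫ v, g (v - a) ∂μ = ∫ v, g v ∂μ := integral_sub_right_eq_self g a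

section Aux

namespace CDVF

variable {K : Type} [Field K] (E : CDVF K)

lemma t_ne_zero : E.t ≠ 0 := by
  intro h
  have h0 : (⟨E.t, E.ht⟩ : E.O) = 0 := Subtype.ext h
  exact not_irreducible_zero (h0 ▸ E.hirr)

lemma not_unit_tpow (n : ℕ) (hn : n ≠ 0) (u : E.O) (hu : IsUnit u)
    (h : (u : E.Fc) = E.t ^ n) : False := by
  have hu' : u = (⟨E.t, E.ht⟩ : E.O) ^ n := by
    apply Subtype.ext
    rw [h]
    simp
  rw [hu'] at hu
  exact E.hirr.not_isUnit (isUnit_of_dvd_unit (dvd_pow_self _ hn) hu)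

lemma zero_of_unit_eq_tzpow (m : ℤ) (u : E.O) (hu : IsUnit u)
    (h : (u : E.Fc) = E.t ^ m) : m = 0 := by
  rcases lt_trichotomy m 0 with hm | hm | hm
  · obtain ⟨v, hv⟩ := hu.exists_right_inv
    have hvne : (u : E.Fc) ≠ 0 := by
      rw [h]; exact zpow_ne_zero _ E.t_ne_zero
    have hcoe : (u : E.Fc) * (v : E.Fc) = 1 := by
      have := congrArg (fun z : E.O => (z : E.Fc)) hv
      simpa using this
    have hv' : (v : E.Fc) = E.t ^ (-m) := by
      rw [zpow_neg, ← h]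
      field_simp
      linear_combination hcoe
    have huv : IsUnit v := IsUnit.of_mul_eq_one u (by
      apply Subtype.ext
      have := congrArg (fun z : E.O => (z : E.Fc)) hv
      simpa [mul_comm] using this)
    exfalso
    refine E.not_unit_tpow (-m).toNat (by omega) v huv ?_
    rw [hv', ← zpow_natCast]
    congr 1
    omega
  · exact hm
  · exfalso
    refine E.not_unit_tpow m.toNat (by omega) u hu ?_
    rw [h, ← zpow_natCast]
    congr 1
    omega

lemma nu_tpow (k : ℤ) : E.ν (E.t ^ k) = k := by
  obtain ⟨u, hu, h⟩ := E.hν _ (zpow_ne_zero k E.t_ne_zero)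
  have h' : (u : E.Fc) = E.t ^ (k - E.ν (E.t ^ k)) := by
    rw [zpow_sub₀ E.t_ne_zero]
    rw [eq_div_iff (zpow_ne_zero _ E.t_ne_zero)]
    exact h.symm
  have := E.zero_of_unit_eq_tzpow _ u hu h'
  omega

lemma resF_coe (x : E.O) : E.resF (x : E.Fc) = E.res x := by
  simp [CDVF.resF, x.2]

lemma resF_one : E.resF 1 = 1 := by
  have := E.resF_coe 1
  simpa using this

end CDVF

end Aux

section Aux2

namespace CDVF

variable {K : Type} [NontriviallyNormedField K] (E : CDVF K)

lemma absF_tpow (k : ℤ) : E.absF (E.t ^ k) = RatFunc.X ^ k := by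
  rw [CDVF.absF, E.nu_tpow]
  have h1 : E.t ^ k * E.t ^ (-k) = 1 := by
    rw [← zpow_add₀ E.t_ne_zero]
    simp
  rw [h1, E.resF_one]
  simp

variable [MeasurableSpace K] (μ : MeasureTheory.Measure K)

lemma lift0_eq_liftAt (f : K → ℂ) : E.lift0 f = E.liftAt f 0 0 := by
  funext z
  simp [CDVF.liftAt]

lemma liftAt_mem_LF {f : K → ℂ} (hf : MeasureTheory.Integrable f μ) (a : E.Fc) (n : ℤ) :
    E.liftAt f a n ∈ E.LF μ :=
  Submodule.subset_span ⟨f, hf, a, n, rfl⟩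

lemma lift0_mem_LF {f : K → ℂ} (hf : MeasureTheory.Integrable f μ) :
    E.lift0 f ∈ E.LF μ := by
  rw [E.lift0_eq_liftAt]
  exact E.liftAt_mem_LF μ hf 0 0

lemma I_liftAt {I : (E.Fc → CX) →ₗ[CX] CX} (hI : E.IsIntegralF μ I)
    {f : K → ℂ} (hf : MeasureTheory.Integrable f μ) (a : E.Fc) (n : ℤ) :
    I (E.liftAt f a n) = RatFunc.X ^ n * algebraMap ℂ CX (∫ u, f u ∂μ) := by
  have e1 : E.liftAt f a n = fun z => E.liftAt f 0 n (z + -a) := by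
    funext z
    show E.lift0 f _ = E.lift0 f _
    congr 1
    rw [sub_zero, ← sub_eq_add_neg]
  have e2 : E.liftAt f 0 n = fun z => E.lift0 f (E.t ^ (-n) * z) := by
    funext z
    show E.lift0 f _ = E.lift0 f _
    rw [sub_zero]
  rw [e1, hI.2.1 _ (E.liftAt_mem_LF μ hf 0 n) (-a), e2,
    hI.2.2 _ (E.lift0_mem_LF μ hf) _ (zpow_ne_zero _ E.t_ne_zero),
    hI.1 f hf, E.absF_tpow, zpow_neg, inv_inv]

end CDVF

end Aux2

set_option synthInstance.maxHeartbeats 1000000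
set_option maxHeartbeats 1000000


/-- The change-of-variables conjecture holds for data
a₁, a₂, n₁, n₂, h of non-negative depth (here the depth is R - n₂, where
h(a₁ + t^{n₁}X) = h(a₁) + t^R q(X) with q ∈ O_F[X] of non-zero image in K[X]). -/
theorem statement11 {K : Type} [NontriviallyNormedField K] [MeasurableSpace K] [BorelSpace K]
    [LocallyCompactSpace K] (μ : Measure K) [Measure.IsAddHaarMeasure μ]
    (E : CDVF K) (I : (E.Fc → CX) →ₗ[CX] CX) (hI : E.IsIntegralF μ I)
    (a₁ a₂ : E.Fc) (n₁ n₂ : ℤ) (h : Polynomial E.Fc)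
    (R : ℤ) (q : Polynomial E.O) (hq0 : q.coeff 0 = 0) (hqbar : q.map E.res ≠ 0)
    (hdecomp : ∀ x : E.Fc, Polynomial.eval (a₁ + E.t ^ n₁ * x) h =
      Polynomial.eval a₁ h + E.t ^ R * Polynomial.eval x (q.map E.O.subtype))
    (hdepth : 0 ≤ R - n₂) :
    E.ConjHolds μ I a₁ a₂ n₁ n₂ h := by
  have ht0 : E.t ≠ 0 := E.t_ne_zero
  have hproper : ProperSpace K := ProperSpace.of_locallyCompactSpace (𝕜 := K) (E := K)
  intro f hf
  -- the sheared Schwartz–Bruhat function φ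
  set m : ℕ := (R - n₂).toNat with hmdef
  have hm : (m : ℤ) = R - n₂ := Int.toNat_of_nonneg hdepth
  set c : E.O := ⟨E.t, E.ht⟩ ^ m with hcdef
  set εK : K := E.res c with hεdef
  set qb : Polynomial K := q.map E.res with hqbdef
  set φ : K × K → ℂ := fun p => f (p.1, p.2 - εK * Polynomial.eval p.1 qb) with hφdef
  set b₂ : E.Fc := a₂ + Polynomial.eval a₁ h with hb₂def
  have hcont2 : Continuous fun p : K × K => (p.1, p.2 - εK * Polynomial.eval p.1 qb) :=
    continuous_fst.prodMk (continuous_snd.sub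
      (continuous_const.mul ((qb.continuous).comp continuous_fst)))
  have hcont2' : Continuous fun p : K × K => (p.1, p.2 + εK * Polynomial.eval p.1 qb) :=
    continuous_fst.prodMk (continuous_snd.add
      (continuous_const.mul ((qb.continuous).comp continuous_fst)))
  let s : (K × K) ≃ₜ (K × K) :=
    { toFun := fun p => (p.1, p.2 - εK * Polynomial.eval p.1 qb)
      invFun := fun p => (p.1, p.2 + εK * Polynomial.eval p.1 qb)
      left_inv := fun p => by simp
      right_inv := fun p => by simp
      continuous_toFun := hcont2
      continuous_invFun := hcont2' }
  have hφlc : IsLocallyConstant φ := hf.1.comp_continuous s.continuous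
  have hφcs : HasCompactSupport φ := hf.2.comp_homeomorph s
  have hφcont : Continuous φ := hφlc.continuous
  have hfcont : Continuous f := hf.1.continuous
  -- integrability of sections of φ
  have hsecv : ∀ u₀ : K, Integrable (fun v => φ (u₀, v)) μ := by
    intro u₀
    have hc : Continuous fun v => φ (u₀, v) := hφcont.comp (Continuous.prodMk_right u₀)
    have hcs : HasCompactSupport fun v => φ (u₀, v) := by
      apply HasCompactSupport.intro (hφcs.image continuous_snd)
      intro v hv
      exact image_eq_zero_of_notMem_tsupport (fun hmem => hv ⟨(u₀, v), hmem, rfl⟩)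
    exact hc.integrable_of_hasCompactSupport hcs
  have hsecu : ∀ v₀ : K, Integrable (fun u => φ (u, v₀)) μ := by
    intro v₀
    have hc : Continuous fun u => φ (u, v₀) :=
      hφcont.comp (continuous_id.prodMk continuous_const)
    have hcs : HasCompactSupport fun u => φ (u, v₀) := by
      apply HasCompactSupport.intro (hφcs.image continuous_fst)
      intro u hu
      exact image_eq_zero_of_notMem_tsupport (fun hmem => hu ⟨(u, v₀), hmem, rfl⟩)
    exact hc.integrable_of_hasCompactSupport hcs
  -- the partial integrals g₁, g₂ of φ
  set g₁ : K → ℂ := fun u => ∫ v, φ (u, v) ∂μ with hg₁def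
  set g₂ : K → ℂ := fun v => ∫ u, φ (u, v) ∂μ with hg₂def
  obtain ⟨hg₁lc, hg₁cs⟩ := aux_g1 μ hφlc hφcs
  have hg₁int : Integrable g₁ μ := hg₁lc.continuous.integrable_of_hasCompactSupport hg₁cs
  have hswaplc : IsLocallyConstant (φ ∘ Prod.swap) := hφlc.comp_continuous continuous_swap
  have hswapcs : HasCompactSupport (φ ∘ Prod.swap) :=
    hφcs.comp_homeomorph (Homeomorph.prodComm K K)
  have hg₂pair := aux_g1 μ hswaplc hswapcs
  have hg₂lc : IsLocallyConstant g₂ := hg₂pair.1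
  have hg₂cs : HasCompactSupport g₂ := hg₂pair.2
  have hg₂int : Integrable g₂ μ := hg₂lc.continuous.integrable_of_hasCompactSupport hg₂cs
  -- Fubini on K × K
  have hφint2 : Integrable φ (μ.prod μ) := hφcont.integrable_of_hasCompactSupport hφcs
  have hfint2 : Integrable f (μ.prod μ) := hfcont.integrable_of_hasCompactSupport hf.2
  have hswapφ : (∫ u, ∫ v, φ (u, v) ∂μ ∂μ) = ∫ v, ∫ u, φ (u, v) ∂μ ∂μ :=
    MeasureTheory.integral_integral_swap (by exact hφint2)
  have hswapf : (∫ u, ∫ v, f (u, v) ∂μ ∂μ) = ∫ v, ∫ u, f (u, v) ∂μ ∂μ :=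
    MeasureTheory.integral_integral_swap (by exact hfint2)
  have hφf : ∀ u : K, (∫ v, φ (u, v) ∂μ) = ∫ v, f (u, v) ∂μ := by
    intro u
    have h2 := MeasureTheory.integral_sub_right_eq_self (μ := μ)
      (fun v => f (u, v)) (εK * Polynomial.eval u qb)
    exact h2
  -- key pointwise identity
  have hkey : ∀ x y : E.Fc, E.liftAt₂ f a₁ a₂ n₁ n₂ x (y - Polynomial.eval x h)
      = E.liftAt₂ φ a₁ b₂ n₁ n₂ x y := by
    intro x y
    set U : E.Fc := E.t ^ (-n₁) * (x - a₁) with hUdef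
    set V : E.Fc := E.t ^ (-n₂) * (y - b₂) with hVdef
    have hmul : E.t ^ n₁ * E.t ^ (-n₁) = 1 := by
      rw [← zpow_add₀ ht0]; simp
    have hxU : a₁ + E.t ^ n₁ * U = x := by
      rw [hUdef, ← mul_assoc]
      linear_combination (x - a₁) * hmul
    have hhx : Polynomial.eval x h
        = Polynomial.eval a₁ h + E.t ^ R * Polynomial.eval U (q.map E.O.subtype) := by
      conv_lhs => rw [← hxU]
      exact hdecomp U
    have htsub : E.t ^ (R - n₂) = E.t ^ R * E.t ^ (-n₂) := by
      rw [← zpow_add₀ ht0, sub_eq_add_neg]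
    have hA : E.t ^ (-n₂) * (y - Polynomial.eval x h - a₂)
        = V - E.t ^ (R - n₂) * Polynomial.eval U (q.map E.O.subtype) := by
      rw [hhx, htsub, hVdef, hb₂def]; ring
    show E.lift0₂ f U (E.t ^ (-n₂) * (y - Polynomial.eval x h - a₂)) = E.lift0₂ φ U V
    rw [hA]
    by_cases hU : U ∈ E.O
    · have hQU : Polynomial.eval U (q.map E.O.subtype)
          = ((Polynomial.eval (⟨U, hU⟩ : E.O) q : E.O) : E.Fc) := by
        rw [Polynomial.eval_map]
        exact Polynomial.eval₂_at_apply E.O.subtype ⟨U, hU⟩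
      have hcc : ((c : E.O) : E.Fc) = E.t ^ (R - n₂) := by
        rw [hcdef]
        push_cast
        rw [← zpow_natCast, hm]
      set d : E.O := c * Polynomial.eval (⟨U, hU⟩ : E.O) q with hddef
      have hd : E.t ^ (R - n₂) * Polynomial.eval U (q.map E.O.subtype) = (d : E.Fc) := by
        rw [hQU, hddef]
        push_cast
        rw [hcc]
      rw [hd]
      by_cases hV : V ∈ E.O
      · have hVd : V - (d : E.Fc) ∈ E.O := E.O.sub_mem hV d.2
        have hr1 : E.resF U = E.res ⟨U, hU⟩ := E.resF_coe ⟨U, hU⟩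
        have hr2 : E.resF (V - (d : E.Fc)) = E.res ⟨V, hV⟩ - E.res d := by
          have hcoe : V - (d : E.Fc) = (((⟨V, hV⟩ : E.O) - d : E.O) : E.Fc) := by
            push_cast; ring
          rw [hcoe, E.resF_coe, map_sub]
        have hr3 : E.res d = εK * Polynomial.eval (E.res ⟨U, hU⟩) qb := by
          rw [hddef, map_mul, hεdef]
          congr 1
          rw [hqbdef, Polynomial.eval_map]
          exact (Polynomial.eval₂_at_apply E.res ⟨U, hU⟩).symm
        have hrV : E.resF V = E.res ⟨V, hV⟩ := E.resF_coe ⟨V, hV⟩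
        show (if U ∈ E.O ∧ V - (d : E.Fc) ∈ E.O
            then algebraMap ℂ CX (f (E.resF U, E.resF (V - (d : E.Fc)))) else 0)
          = (if U ∈ E.O ∧ V ∈ E.O then algebraMap ℂ CX (φ (E.resF U, E.resF V)) else 0)
        rw [if_pos ⟨hU, hVd⟩, if_pos ⟨hU, hV⟩]
        congr 1
        show f (E.resF U, E.resF (V - (d : E.Fc)))
          = f (E.resF U, E.resF V - εK * Polynomial.eval (E.resF U) qb)
        rw [hr1, hr2, hr3, hrV]
      · have hVd : V - (d : E.Fc) ∉ E.O := by
          intro hmem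
          apply hV
          have h3 := E.O.add_mem hmem d.2
          simpa using h3
        show (if U ∈ E.O ∧ V - (d : E.Fc) ∈ E.O
            then algebraMap ℂ CX (f (E.resF U, E.resF (V - (d : E.Fc)))) else 0)
          = (if U ∈ E.O ∧ V ∈ E.O then algebraMap ℂ CX (φ (E.resF U, E.resF V)) else 0)
        rw [if_neg (by tauto), if_neg (by tauto)]
    · show (if U ∈ E.O ∧ _ ∈ E.O then algebraMap ℂ CX (f (E.resF U, E.resF _)) else 0)
        = (if U ∈ E.O ∧ V ∈ E.O then algebraMap ℂ CX (φ (E.resF U, E.resF V)) else 0)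
      rw [if_neg (by tauto), if_neg (by tauto)]
  -- section descriptions
  have hsec1a : ∀ x : E.Fc, E.t ^ (-n₁) * (x - a₁) ∈ E.O →
      (fun y => E.liftAt₂ φ a₁ b₂ n₁ n₂ x y)
        = E.liftAt (fun v => φ (E.resF (E.t ^ (-n₁) * (x - a₁)), v)) b₂ n₂ := by
    intro x hU
    funext y
    show (if E.t ^ (-n₁) * (x - a₁) ∈ E.O ∧ E.t ^ (-n₂) * (y - b₂) ∈ E.O
        then algebraMap ℂ CX (φ (E.resF (E.t ^ (-n₁) * (x - a₁)),
          E.resF (E.t ^ (-n₂) * (y - b₂)))) else 0)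
      = (if E.t ^ (-n₂) * (y - b₂) ∈ E.O
        then algebraMap ℂ CX (φ (E.resF (E.t ^ (-n₁) * (x - a₁)),
          E.resF (E.t ^ (-n₂) * (y - b₂)))) else 0)
    by_cases hV : E.t ^ (-n₂) * (y - b₂) ∈ E.O
    · rw [if_pos ⟨hU, hV⟩, if_pos hV]
    · rw [if_neg (by tauto), if_neg hV]
  have hsec1b : ∀ x : E.Fc, E.t ^ (-n₁) * (x - a₁) ∉ E.O →
      (fun y => E.liftAt₂ φ a₁ b₂ n₁ n₂ x y) = 0 := by
    intro x hU
    funext y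
    show (if E.t ^ (-n₁) * (x - a₁) ∈ E.O ∧ E.t ^ (-n₂) * (y - b₂) ∈ E.O
        then algebraMap ℂ CX (φ (E.resF (E.t ^ (-n₁) * (x - a₁)),
          E.resF (E.t ^ (-n₂) * (y - b₂)))) else 0) = 0
    rw [if_neg (by tauto)]
  have hsec2a : ∀ y : E.Fc, E.t ^ (-n₂) * (y - b₂) ∈ E.O →
      (fun x => E.liftAt₂ φ a₁ b₂ n₁ n₂ x y)
        = E.liftAt (fun u => φ (u, E.resF (E.t ^ (-n₂) * (y - b₂)))) a₁ n₁ := by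
    intro y hV
    funext x
    show (if E.t ^ (-n₁) * (x - a₁) ∈ E.O ∧ E.t ^ (-n₂) * (y - b₂) ∈ E.O
        then algebraMap ℂ CX (φ (E.resF (E.t ^ (-n₁) * (x - a₁)),
          E.resF (E.t ^ (-n₂) * (y - b₂)))) else 0)
      = (if E.t ^ (-n₁) * (x - a₁) ∈ E.O
        then algebraMap ℂ CX (φ (E.resF (E.t ^ (-n₁) * (x - a₁)),
          E.resF (E.t ^ (-n₂) * (y - b₂)))) else 0)
    by_cases hU : E.t ^ (-n₁) * (x - a₁) ∈ E.O
    · rw [if_pos ⟨hU, hV⟩, if_pos hU]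
    · rw [if_neg (by tauto), if_neg hU]
  have hsec2b : ∀ y : E.Fc, E.t ^ (-n₂) * (y - b₂) ∉ E.O →
      (fun x => E.liftAt₂ φ a₁ b₂ n₁ n₂ x y) = 0 := by
    intro y hV
    funext x
    show (if E.t ^ (-n₁) * (x - a₁) ∈ E.O ∧ E.t ^ (-n₂) * (y - b₂) ∈ E.O
        then algebraMap ℂ CX (φ (E.resF (E.t ^ (-n₁) * (x - a₁)),
          E.resF (E.t ^ (-n₂) * (y - b₂)))) else 0) = 0
    rw [if_neg (by tauto)]
  -- the repeated integrands
  have hinner1 : (fun x => I (fun y => E.liftAt₂ φ a₁ b₂ n₁ n₂ x y))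
      = (RatFunc.X ^ n₂ : CX) • E.liftAt g₁ a₁ n₁ := by
    funext x
    rw [Pi.smul_apply, smul_eq_mul]
    by_cases hU : E.t ^ (-n₁) * (x - a₁) ∈ E.O
    · rw [hsec1a x hU, E.I_liftAt μ hI (hsecv _) b₂ n₂]
      have h4 : E.liftAt g₁ a₁ n₁ x
          = algebraMap ℂ CX (∫ v, φ (E.resF (E.t ^ (-n₁) * (x - a₁)), v) ∂μ) := by
        show (if E.t ^ (-n₁) * (x - a₁) ∈ E.O
            then algebraMap ℂ CX (g₁ (E.resF (E.t ^ (-n₁) * (x - a₁)))) else 0) = _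
        rw [if_pos hU]
      rw [h4]
    · rw [hsec1b x hU, map_zero]
      have h4 : E.liftAt g₁ a₁ n₁ x = 0 := by
        show (if E.t ^ (-n₁) * (x - a₁) ∈ E.O
            then algebraMap ℂ CX (g₁ (E.resF (E.t ^ (-n₁) * (x - a₁)))) else 0) = 0
        rw [if_neg hU]
      rw [h4, mul_zero]
  have hinner2 : (fun y => I (fun x => E.liftAt₂ φ a₁ b₂ n₁ n₂ x y))
      = (RatFunc.X ^ n₁ : CX) • E.liftAt g₂ b₂ n₂ := by
    funext y
    rw [Pi.smul_apply, smul_eq_mul]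
    by_cases hV : E.t ^ (-n₂) * (y - b₂) ∈ E.O
    · rw [hsec2a y hV, E.I_liftAt μ hI (hsecu _) a₁ n₁]
      have h4 : E.liftAt g₂ b₂ n₂ y
          = algebraMap ℂ CX (∫ u, φ (u, E.resF (E.t ^ (-n₂) * (y - b₂))) ∂μ) := by
        show (if E.t ^ (-n₂) * (y - b₂) ∈ E.O
            then algebraMap ℂ CX (g₂ (E.resF (E.t ^ (-n₂) * (y - b₂)))) else 0) = _
        rw [if_pos hV]
      rw [h4]
    · rw [hsec2b y hV, map_zero]
      have h4 : E.liftAt g₂ b₂ n₂ y = 0 := by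
        show (if E.t ^ (-n₂) * (y - b₂) ∈ E.O
            then algebraMap ℂ CX (g₂ (E.resF (E.t ^ (-n₂) * (y - b₂)))) else 0) = 0
        rw [if_neg hV]
      rw [h4, mul_zero]
  have hIg₁ : I (E.liftAt g₁ a₁ n₁) = RatFunc.X ^ n₁ * algebraMap ℂ CX (∫ u, g₁ u ∂μ) :=
    E.I_liftAt μ hI hg₁int a₁ n₁
  have hIg₂ : I (E.liftAt g₂ b₂ n₂) = RatFunc.X ^ n₂ * algebraMap ℂ CX (∫ v, g₂ v ∂μ) :=
    E.I_liftAt μ hI hg₂int b₂ n₂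
  have hval : (∫ u, g₁ u ∂μ) = ∫ v, g₂ v ∂μ := hswapφ
  have hvalf : (∫ v, g₂ v ∂μ) = ∫ v, ∫ u, f (u, v) ∂μ ∂μ := by
    calc (∫ v, g₂ v ∂μ) = ∫ u, ∫ v, φ (u, v) ∂μ ∂μ := hswapφ.symm
      _ = ∫ u, ∫ v, f (u, v) ∂μ ∂μ := by
          rw [show (fun u => ∫ v, φ (u, v) ∂μ) = fun u => ∫ v, f (u, v) ∂μ from funext hφf]
      _ = ∫ v, ∫ u, f (u, v) ∂μ ∂μ := hswapf
  have hfun : (fun x y => E.liftAt₂ f a₁ a₂ n₁ n₂ x (y - Polynomial.eval x h))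
      = fun x y => E.liftAt₂ φ a₁ b₂ n₁ n₂ x y :=
    _root_.funext fun x => _root_.funext (hkey x)
  constructor
  · rw [hfun]
    refine ⟨?_, ?_, ?_, ?_, ?_⟩
    · intro x
      show (fun y => E.liftAt₂ φ a₁ b₂ n₁ n₂ x y) ∈ E.LF μ
      by_cases hU : E.t ^ (-n₁) * (x - a₁) ∈ E.O
      · rw [hsec1a x hU]; exact E.liftAt_mem_LF μ (hsecv _) b₂ n₂
      · rw [hsec1b x hU]; exact (E.LF μ).zero_mem
    · show (fun x => I (fun y => E.liftAt₂ φ a₁ b₂ n₁ n₂ x y)) ∈ E.LF μ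
      rw [hinner1]
      exact Submodule.smul_mem _ _ (E.liftAt_mem_LF μ hg₁int a₁ n₁)
    · intro y
      show (fun x => E.liftAt₂ φ a₁ b₂ n₁ n₂ x y) ∈ E.LF μ
      by_cases hV : E.t ^ (-n₂) * (y - b₂) ∈ E.O
      · rw [hsec2a y hV]; exact E.liftAt_mem_LF μ (hsecu _) a₁ n₁
      · rw [hsec2b y hV]; exact (E.LF μ).zero_mem
    · show (fun y => I (fun x => E.liftAt₂ φ a₁ b₂ n₁ n₂ x y)) ∈ E.LF μ
      rw [hinner2]
      exact Submodule.smul_mem _ _ (E.liftAt_mem_LF μ hg₂int b₂ n₂)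
    · show I (fun x => I (fun y => E.liftAt₂ φ a₁ b₂ n₁ n₂ x y))
        = I (fun y => I (fun x => E.liftAt₂ φ a₁ b₂ n₁ n₂ x y))
      rw [hinner1, hinner2, LinearMap.map_smul, LinearMap.map_smul, hIg₁, hIg₂, smul_eq_mul, smul_eq_mul, hval]
      ring
  · simp only [hkey]
    rw [hinner2, LinearMap.map_smul, hIg₂, smul_eq_mul, hvalf, zpow_add₀ (RatFunc.X_ne_zero (K := ℂ))]
    ring
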